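/- The class of complements of quasi-threshold graphs has unbounded linear clique-width: for every k there exists a quasi-threshold graph G whose complement satisfies lcw(complement of G) > k. -/

import Mathlib

/-! ## Common definitions

Linear clique-width (lcw) expressions and derived notions, following
Brignall–Lozin–Stacho, "Bichain graphs: geometric model and universal graphs" /
"Linear clique-width of subclasses of cographs".

An lcw expression over a label alphabet `L` is a list of operations:
insert a new vertex with a given label, add all edges between two distinct
label classes, or relabel one label class to another.  Vertices are indexed
by the natural numbers `0, 1, 2, …` in order of insertion. -/

/-- The three kinds of operations of an lcw expression. -/
inductive LcwOp (L : Type) where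
  | insert : L → LcwOp L
  | join : L → L → LcwOp L
  | relabel : L → L → LcwOp L

/-- The state while executing an lcw expression: the number `n` of vertices
inserted so far (the vertices are `0, …, n-1`), the adjacency relation built
so far, and the current labeling (`none` for indices not yet inserted). -/
structure LcwState (L : Type) where
  n : ℕ
  adj : ℕ → ℕ → Prop
  lab : ℕ → Option L

/-- The initial, empty state. -/
def LcwState.init (L : Type) : LcwState L :=
  ⟨0, fun _ _ => False, fun _ => none⟩

/-- Executing one operation. -/
def LcwState.step {L : Type} [DecidableEq L] (s : LcwState L) : LcwOp L → LcwState L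
  | .insert a => ⟨s.n + 1, s.adj, fun v => if v = s.n then some a else s.lab v⟩
  | .join i j =>
      ⟨s.n,
       fun u v => s.adj u v ∨
         (u ≠ v ∧ ((s.lab u = some i ∧ s.lab v = some j) ∨
                   (s.lab u = some j ∧ s.lab v = some i))),
       s.lab⟩
  | .relabel i j => ⟨s.n, s.adj, fun v => if s.lab v = some i then some j else s.lab v⟩

/-- Executing an lcw expression (a list of operations) from the empty state. -/
def runLcw {L : Type} [DecidableEq L] (e : List (LcwOp L)) : LcwState L :=
  e.foldl LcwState.step (LcwState.init L)

/-- Well-formedness: every edge-adding operation uses two distinct labels. -/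
def WfExpr {L : Type} (e : List (LcwOp L)) : Prop :=
  ∀ op ∈ e, ∀ i j : L, op = LcwOp.join i j → i ≠ j

/-- The expression `e` builds the graph `G`, where the bijection
`f` sends each vertex of `G` to its insertion index (so `f` records the
insertion order of the vertices). -/
def BuildsVia {L V : Type} [DecidableEq L] [Fintype V] (e : List (LcwOp L))
    (G : SimpleGraph V) (f : V → ℕ) : Prop :=
  WfExpr e ∧ Function.Injective f ∧ (runLcw e).n = Fintype.card V ∧
    (∀ v, f v < (runLcw e).n) ∧ ∀ u v, G.Adj u v ↔ (runLcw e).adj (f u) (f v)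

/-- The expression `e` builds the graph `G`. -/
def Builds {L V : Type} [DecidableEq L] [Fintype V] (e : List (LcwOp L))
    (G : SimpleGraph V) : Prop :=
  ∃ f : V → ℕ, BuildsVia e G f

/-- The linear clique-width of a finite graph: the least size of a label
alphabet over which some lcw expression builds `G`.  (An expression over
`Fin k` is an expression using `k` labels; an *efficient* expression for `G`
is one over `Fin (lcw G)`.) -/
noncomputable def lcw {V : Type} [Fintype V] (G : SimpleGraph V) : ℕ :=
  sInf {k : ℕ | ∃ e : List (LcwOp (Fin k)), Builds e G}

/-- `ℓ` is a sink label of the expression `e`: it is never used in an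
edge-adding operation and vertices labeled `ℓ` are never relabeled. -/
def SinkLabel {L : Type} (e : List (LcwOp L)) (ℓ : L) : Prop :=
  (∀ op ∈ e, ∀ i j : L, op = LcwOp.join i j → i ≠ ℓ ∧ j ≠ ℓ) ∧
  (∀ op ∈ e, ∀ j : L, op = LcwOp.relabel ℓ j → j = ℓ)

/-- An expression is sink-free if no label is a sink label. -/
def SinkFree {L : Type} (e : List (LcwOp L)) : Prop :=
  ∀ ℓ : L, ¬ SinkLabel e ℓ

/-- The disjoint union of two graphs. -/
def GraphDisjUnion {V W : Type} (G : SimpleGraph V) (H : SimpleGraph W) :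
    SimpleGraph (V ⊕ W) where
  Adj x y :=
    match x, y with
    | Sum.inl a, Sum.inl b => G.Adj a b
    | Sum.inr a, Sum.inr b => H.Adj a b
    | _, _ => False
  symm := by
    constructor
    rintro (a | a) (b | b) h
    · exact G.adj_symm h
    · exact h.elim
    · exact h.elim
    · exact H.adj_symm h
  loopless := by
    constructor
    rintro (a | a) h
    · exact G.irrefl h
    · exact H.irrefl h

/-- The join of two graphs: their disjoint union together with all edges
between the two sides. -/
def GraphJoin {V W : Type} (G : SimpleGraph V) (H : SimpleGraph W) :
    SimpleGraph (V ⊕ W) :=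
  (GraphDisjUnion Gᶜ Hᶜ)ᶜ

/-- `H` is (isomorphic to) an induced subgraph of `G`. -/
def InducedSubgraphOf {W V : Type} (H : SimpleGraph W) (G : SimpleGraph V) : Prop :=
  ∃ f : W ↪ V, ∀ a b : W, H.Adj a b ↔ G.Adj (f a) (f b)

/-- The path `P₄` on four vertices (edges 01, 12, 23). -/
def pathP4 : SimpleGraph (Fin 4) :=
  SimpleGraph.fromRel (fun a b => (b : ℕ) = (a : ℕ) + 1)

/-- The cycle `C₄` on four vertices (edges 01, 12, 23, 30). -/
def cycleC4 : SimpleGraph (Fin 4) :=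
  SimpleGraph.fromRel (fun a b => (b : ℕ) = (a : ℕ) + 1 ∨ ((a : ℕ) = 3 ∧ (b : ℕ) = 0))

/-- The graph `2K₂` (edges 01 and 23). -/
def twoK2 : SimpleGraph (Fin 4) :=
  SimpleGraph.fromRel (fun a b => ((a : ℕ) = 0 ∧ (b : ℕ) = 1) ∨ ((a : ℕ) = 2 ∧ (b : ℕ) = 3))

/-- Cographs: the graphs with no induced `P₄`. -/
def IsCograph {V : Type} (G : SimpleGraph V) : Prop :=
  ¬ InducedSubgraphOf pathP4 G

/-- Quasi-threshold (trivially perfect) graphs: no induced `P₄` and no induced `C₄`. -/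
def IsQuasiThreshold {V : Type} (G : SimpleGraph V) : Prop :=
  ¬ InducedSubgraphOf pathP4 G ∧ ¬ InducedSubgraphOf cycleC4 G

/-- Threshold graphs: no induced `P₄`, `C₄` or `2K₂`. -/
def IsThreshold {V : Type} (G : SimpleGraph V) : Prop :=
  ¬ InducedSubgraphOf pathP4 G ∧ ¬ InducedSubgraphOf cycleC4 G ∧ ¬ InducedSubgraphOf twoK2 G

/-- A finite graph, encoded with vertex set `Fin n`.  A *class* of graphs,
i.e. a set of finite graphs closed under isomorphism, is modelled as a
hereditary set of `FinGraph`s (hereditary sets are automatically closed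
under isomorphism). -/
def FinGraph : Type := Σ n : ℕ, SimpleGraph (Fin n)

/-- The complement of a finite graph. -/
def FinGraph.compl (G : FinGraph) : FinGraph := ⟨G.1, G.2ᶜ⟩

/-- The induced-subgraph order on finite graphs. -/
def IndF (H G : FinGraph) : Prop := InducedSubgraphOf H.2 G.2

/-- A set of finite graphs is hereditary if it is closed downward under the
induced subgraph order (in particular it is closed under isomorphism). -/
def Hereditary (C : Set FinGraph) : Prop :=
  ∀ G ∈ C, ∀ H : FinGraph, IndF H G → H ∈ C

/-- The finite graph `K` is isomorphic to the graph `G`. -/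
def IsoTo {V : Type} (K : FinGraph) (G : SimpleGraph V) : Prop :=
  ∃ e : Fin K.1 ≃ V, ∀ a b, K.2.Adj a b ↔ G.Adj (e a) (e b)

/-- The class `C` contains (a copy of) the graph `G`. -/
def MemUpToIso (C : Set FinGraph) {V : Type} (G : SimpleGraph V) : Prop :=
  ∃ K ∈ C, IsoTo K G

/-- `C` is closed under disjoint unions. -/
def ClosedUnderDisjointUnions (C : Set FinGraph) : Prop :=
  ∀ G ∈ C, ∀ H ∈ C, MemUpToIso C (GraphDisjUnion (Sigma.snd G) (Sigma.snd H))

/-- `C` is closed under joins. -/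
def ClosedUnderJoins (C : Set FinGraph) : Prop :=
  ∀ G ∈ C, ∀ H ∈ C, MemUpToIso C (GraphJoin (Sigma.snd G) (Sigma.snd H))

/-- `C` is atomic: it cannot be written as the union of two proper
hereditary subclasses. -/
def AtomicClass (C : Set FinGraph) : Prop :=
  ¬ ∃ D₁ D₂ : Set FinGraph, Hereditary D₁ ∧ Hereditary D₂ ∧
      D₁ ⊂ C ∧ D₂ ⊂ C ∧ C = D₁ ∪ D₂

/-- The inflation `G[H₁, …, Hₙ]` of a graph `G` on `Fin n` by graphs
`H i` (`i : Fin n`): substitute `H i` for the vertex `i` of `G`. -/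
def inflate {n : ℕ} (G : SimpleGraph (Fin n)) (m : Fin n → ℕ)
    (H : ∀ i : Fin n, SimpleGraph (Fin (m i))) :
    SimpleGraph (Σ i : Fin n, Fin (m i)) where
  Adj x y := (x.1 ≠ y.1 ∧ G.Adj x.1 y.1) ∨ ∃ h : x.1 = y.1, (H y.1).Adj (h ▸ x.2) y.2
  symm := by
    constructor
    rintro ⟨i, a⟩ ⟨j, b⟩ (⟨hne, hadj⟩ | ⟨h, hadj⟩)
    · exact Or.inl ⟨hne.symm, G.adj_symm hadj⟩
    · cases h
      exact Or.inr ⟨rfl, (H i).adj_symm hadj⟩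
  loopless := by
    constructor
    rintro ⟨i, a⟩ (⟨hne, _⟩ | ⟨h, hadj⟩)
    · exact hne rfl
    · exact (H i).irrefl hadj

/-- The inflation `C[D]` of the class `C` by the class `D`: all graphs
isomorphic to an inflation of a graph of `C` by graphs of `D`. -/
def classInflate (C D : Set FinGraph) : Set FinGraph :=
  {K | ∃ (n : ℕ) (G : SimpleGraph (Fin n)) (m : Fin n → ℕ)
        (H : ∀ i : Fin n, SimpleGraph (Fin (m i))),
      (⟨n, G⟩ : FinGraph) ∈ C ∧ (∀ i, (⟨m i, H i⟩ : FinGraph) ∈ D) ∧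
      IsoTo K (inflate G m H)}

/-- The class of threshold graphs (as finite graphs). -/
def thresholdClass : Set FinGraph := {G : FinGraph | IsThreshold G.2}

/-- Vertex types of the sequence witnessing unbounded linear clique-width:
`qtV 0` carries `G₁ = K₂` and `qtV (k+1)` carries
`G_{k+2} = K₁ ∗ ((G_{k+1} ∪ G_{k+1}) ∪ (G_{k+1} ∪ G_{k+1}))`. -/
def qtV : ℕ → Type
  | 0 => Fin 2
  | k + 1 => Unit ⊕ ((qtV k ⊕ qtV k) ⊕ (qtV k ⊕ qtV k))

instance qtVFintype : ∀ k : ℕ, Fintype (qtV k)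
  | 0 => inferInstanceAs (Fintype (Fin 2))
  | k + 1 =>
      letI := qtVFintype k
      inferInstanceAs (Fintype (Unit ⊕ ((qtV k ⊕ qtV k) ⊕ (qtV k ⊕ qtV k))))

/-- The graphs `G₁, G₂, …` of the paper, reindexed so that `qtG k = G_{k+1}`:
`qtG 0 = K₂` and `qtG (k+1) = K₁ ∗ ((qtG k ∪ qtG k) ∪ (qtG k ∪ qtG k))`. -/
def qtG : ∀ k : ℕ, SimpleGraph (qtV k)
  | 0 => (⊤ : SimpleGraph (Fin 2))
  | k + 1 =>
      GraphJoin (⊥ : SimpleGraph Unit)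
        (GraphDisjUnion (GraphDisjUnion (qtG k) (qtG k)) (GraphDisjUnion (qtG k) (qtG k)))

section LcwAux
variable {L : Type} [DecidableEq L]
set_option linter.unusedSectionVars false

lemma step_n_le (s : LcwState L) (op : LcwOp L) : s.n ≤ (s.step op).n := by
  cases op <;> simp [LcwState.step]

lemma step_n_le_succ (s : LcwState L) (op : LcwOp L) : (s.step op).n ≤ s.n + 1 := by
  cases op <;> simp [LcwState.step]

lemma foldl_n_le (e : List (LcwOp L)) (s : LcwState L) :
    s.n ≤ (e.foldl LcwState.step s).n := by
  induction e generalizing s with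
  | nil => simp
  | cons op e ih => exact le_trans (step_n_le s op) (ih _)

/-- Invariant of reachable states. -/
def InvS (s : LcwState L) : Prop :=
  (∀ c, s.n ≤ c → s.lab c = none) ∧
  (∀ c, s.n ≤ c → ∀ x, ¬ s.adj x c ∧ ¬ s.adj c x) ∧
  (∀ c, c < s.n → ∃ a, s.lab c = some a)

lemma invS_init : InvS (LcwState.init L) := by
  refine ⟨fun c _ => rfl, fun c _ x => ⟨id, id⟩, fun c hc => absurd hc (by simp [LcwState.init])⟩

lemma invS_step (s : LcwState L) (op : LcwOp L) (h : InvS s) : InvS (s.step op) := by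
  obtain ⟨h1, h2, h3⟩ := h
  cases op with
  | insert a =>
      refine ⟨fun c hc => ?_, fun c hc x => h2 c (le_trans (step_n_le s _) hc) x, fun c hc => ?_⟩
      · have hc' : s.n + 1 ≤ c := by simpa [LcwState.step] using hc
        simp only [LcwState.step]
        rw [if_neg (by omega)]
        exact h1 c (by omega)
      · simp only [LcwState.step] at hc ⊢
        by_cases hcn : c = s.n
        · exact ⟨a, by rw [if_pos hcn]⟩
        · rw [if_neg hcn]; exact h3 c (by omega)
  | join i j =>
      refine ⟨fun c hc => h1 c hc, fun c hc x => ?_, fun c hc => h3 c hc⟩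
      have hlc : s.lab c = none := h1 c hc
      constructor
      · rintro (hh | ⟨_, ⟨_, hc2⟩ | ⟨_, hc2⟩⟩)
        · exact (h2 c hc x).1 hh
        · rw [hlc] at hc2; cases hc2
        · rw [hlc] at hc2; cases hc2
      · rintro (hh | ⟨_, ⟨hc2, _⟩ | ⟨hc2, _⟩⟩)
        · exact (h2 c hc x).2 hh
        · rw [hlc] at hc2; cases hc2
        · rw [hlc] at hc2; cases hc2
  | relabel i j =>
      refine ⟨fun c hc => ?_, fun c hc x => h2 c hc x, fun c hc => ?_⟩
      · simp only [LcwState.step]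
        rw [h1 c hc]; simp
      · obtain ⟨a, ha⟩ := h3 c hc
        simp only [LcwState.step]
        by_cases hia : s.lab c = some i
        · exact ⟨j, by rw [if_pos hia]⟩
        · exact ⟨a, by rw [if_neg hia, ha]⟩

lemma invS_foldl (e : List (LcwOp L)) (s : LcwState L) (h : InvS s) :
    InvS (e.foldl LcwState.step s) := by
  induction e generalizing s with
  | nil => exact h
  | cons op e ih => exact ih _ (invS_step s op h)

lemma invS_runLcw (e : List (LcwOp L)) : InvS (runLcw e) :=
  invS_foldl e _ invS_init

lemma exists_prefix (e : List (LcwOp L)) (m : ℕ) (hm : m ≤ (runLcw e).n) :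
    ∃ p q, e = p ++ q ∧ (runLcw p).n = m := by
  induction e using List.reverseRecOn with
  | nil =>
      refine ⟨[], [], by simp, ?_⟩
      have : (runLcw ([] : List (LcwOp L))).n = 0 := rfl
      omega
  | append_singleton e' op ih =>
      have hrun : runLcw (e' ++ [op]) = (runLcw e').step op := by
        simp [runLcw, List.foldl_append]
      by_cases hm' : m ≤ (runLcw e').n
      · obtain ⟨p, q, hpq, hp⟩ := ih hm'
        exact ⟨p, q ++ [op], by simp [hpq], hp⟩
      · refine ⟨e' ++ [op], [], by simp, ?_⟩
        have h1 := step_n_le_succ (runLcw e') op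
        rw [hrun] at hm ⊢
        omega

/-- Two same-labeled, already-inserted vertices get the same future edges. -/
lemma same_future_aux (a b c : ℕ) (e : List (LcwOp L)) :
    ∀ s : LcwState L, a < s.n → b < s.n → s.lab a = s.lab b → a ≠ c → b ≠ c →
      (s.adj a c ↔ s.adj b c) → (s.adj c a ↔ s.adj c b) →
      ((e.foldl LcwState.step s).adj a c ↔ (e.foldl LcwState.step s).adj b c) := by
  induction e with
  | nil => intro s _ _ _ _ _ h _; exact h
  | cons op e ih =>
      intro s ha hb hlab hac hbc hadj hadj'
      have hstep : a < (s.step op).n ∧ b < (s.step op).n := by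
        have := step_n_le s op; omega
      cases op with
      | insert x =>
          refine ih _ hstep.1 hstep.2 ?_ hac hbc hadj hadj'
          simp only [LcwState.step]
          rw [if_neg (by omega), if_neg (by omega)]
          exact hlab
      | join i j =>
          refine ih _ hstep.1 hstep.2 hlab hac hbc ?_ ?_
          · simp only [LcwState.step]
            rw [hlab]
            constructor
            · rintro (h | h)
              · exact Or.inl (hadj.mp h)
              · exact Or.inr ⟨hbc, h.2⟩
            · rintro (h | h)
              · exact Or.inl (hadj.mpr h)
              · exact Or.inr ⟨hac, h.2⟩
          · simp only [LcwState.step]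
            rw [hlab]
            constructor
            · rintro (h | h)
              · exact Or.inl (hadj'.mp h)
              · exact Or.inr ⟨fun hh => hbc hh.symm, h.2⟩
            · rintro (h | h)
              · exact Or.inl (hadj'.mpr h)
              · exact Or.inr ⟨fun hh => hac hh.symm, h.2⟩
      | relabel i j =>
          refine ih _ hstep.1 hstep.2 ?_ hac hbc hadj hadj'
          simp only [LcwState.step]
          rw [hlab]

end LcwAux

/-- If `G` admits, for every injective vertex numbering, a cut with `K+1`
pairwise future-distinguished past vertices, then any expression building `G`
uses at least `K+1` labels. -/
lemma labels_lower_bound {j K : ℕ} {V : Type} [Fintype V] {G : SimpleGraph V}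
    (e : List (LcwOp (Fin j))) (hb : Builds e G)
    (hGood : ∀ f : V → ℕ, Function.Injective f →
      ∃ (m : ℕ) (s : Fin (K+1) → V),
        (∀ i, f (s i) < m) ∧
        (∀ i i', i ≠ i' → ∃ w, m ≤ f w ∧ ¬(G.Adj (s i) w ↔ G.Adj (s i') w))) :
    K + 1 ≤ j := by
  obtain ⟨f, hwf, hinj, hn, hlt, hadj⟩ := hb
  obtain ⟨m, s, hpast, hwit⟩ := hGood f hinj
  set m' := min m ((runLcw e).n) with hm'
  obtain ⟨p, q, hpq, hp⟩ := exists_prefix e m' (min_le_right _ _)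
  have hinv : InvS (runLcw p) := invS_runLcw p
  have hpast' : ∀ i, f (s i) < (runLcw p).n := by
    intro i
    have h1 := hpast i
    have h2 : f (s i) < (runLcw e).n := hlt (s i)
    omega
  have hsome : ∀ i, ∃ a, (runLcw p).lab (f (s i)) = some a :=
    fun i => hinv.2.2 _ (hpast' i)
  choose g hg using hsome
  have hginj : Function.Injective g := by
    intro i i' hgii
    by_contra hne
    obtain ⟨w, hw1, hw2⟩ := hwit i i' hne
    have hwn : (runLcw p).n ≤ f w := by
      have h2 : f w < (runLcw e).n := hlt w
      omega
    have hrun : runLcw e = q.foldl LcwState.step (runLcw p) := by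
      rw [hpq]; simp [runLcw, List.foldl_append]
    have hlabeq : (runLcw p).lab (f (s i)) = (runLcw p).lab (f (s i')) := by
      rw [hg i, hg i', hgii]
    have hne1 : f (s i) ≠ f w := by have := hpast' i; omega
    have hne2 : f (s i') ≠ f w := by have := hpast' i'; omega
    have hzero := hinv.2.1 (f w) hwn
    have key := same_future_aux (f (s i)) (f (s i')) (f w) q (runLcw p)
      (hpast' i) (hpast' i') hlabeq hne1 hne2
      (by constructor
          · intro h; exact absurd h (hzero (f (s i))).1
          · intro h; exact absurd h (hzero (f (s i'))).1)
      (by constructor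
          · intro h; exact absurd h (hzero (f (s i))).2
          · intro h; exact absurd h (hzero (f (s i'))).2)
    rw [← hrun] at key
    exact hw2 ((hadj (s i) w).trans (key.trans (hadj (s i') w).symm))
  simpa using Fintype.card_le_of_injective g hginj

section Upper

lemma runLcw_insertList {n : ℕ} (ls : List (Fin n)) :
    (runLcw (ls.map LcwOp.insert)).n = ls.length ∧
    (∀ u v, ¬ (runLcw (ls.map LcwOp.insert)).adj u v) ∧
    (∀ c : ℕ, (runLcw (ls.map LcwOp.insert)).lab c =
      if h : c < ls.length then some ls[c] else none) := by
  induction ls using List.reverseRecOn with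
  | nil => exact ⟨rfl, fun u v h => h, fun c => by simp [runLcw, LcwState.init]⟩
  | append_singleton ls a ih =>
      obtain ⟨ih1, ih2, ih3⟩ := ih
      have hrun : runLcw ((ls ++ [a]).map LcwOp.insert)
          = (runLcw (ls.map LcwOp.insert)).step (LcwOp.insert a) := by
        simp [runLcw, List.foldl_append]
      refine ⟨?_, ?_, ?_⟩
      · rw [hrun]; simp [LcwState.step, ih1]
      · intro u v; rw [hrun]; exact ih2 u v
      · intro c
        rw [hrun]
        simp only [LcwState.step, ih1]
        by_cases hc : c = ls.length
        · subst hc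
          rw [if_pos rfl, dif_pos (by simp)]
          simp
        · rw [if_neg hc, ih3 c]
          by_cases hlt : c < ls.length
          · rw [dif_pos hlt, dif_pos (by simp; omega)]
            congr 1
            exact (List.getElem_append_left _).symm
          · rw [dif_neg hlt, dif_neg (by simp; omega)]

lemma foldl_joins {n : ℕ} (ps : List (Fin n × Fin n)) (s : LcwState (Fin n)) :
    ((ps.map (fun p => LcwOp.join p.1 p.2)).foldl LcwState.step s).n = s.n ∧
    ((ps.map (fun p => LcwOp.join p.1 p.2)).foldl LcwState.step s).lab = s.lab ∧
    (∀ u v, ((ps.map (fun p => LcwOp.join p.1 p.2)).foldl LcwState.step s).adj u v ↔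
      (s.adj u v ∨ ∃ p ∈ ps, u ≠ v ∧
        ((s.lab u = some p.1 ∧ s.lab v = some p.2) ∨
         (s.lab u = some p.2 ∧ s.lab v = some p.1)))) := by
  induction ps generalizing s with
  | nil => simp
  | cons p ps ih =>
      obtain ⟨ih1, ih2, ih3⟩ := ih (s.step (LcwOp.join p.1 p.2))
      refine ⟨ih1, ih2, fun u v => ?_⟩
      simp only [List.map_cons, List.foldl_cons]
      rw [ih3 u v]
      have hlab : (s.step (LcwOp.join p.1 p.2)).lab = s.lab := rfl
      have hadj : (s.step (LcwOp.join p.1 p.2)).adj u v ↔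
          s.adj u v ∨ u ≠ v ∧ ((s.lab u = some p.1 ∧ s.lab v = some p.2) ∨
            (s.lab u = some p.2 ∧ s.lab v = some p.1)) := Iff.rfl
      rw [hlab, hadj]
      simp only [List.mem_cons]
      constructor
      · rintro ((h | h) | ⟨q, hq, hcond⟩)
        · exact Or.inl h
        · exact Or.inr ⟨p, Or.inl rfl, h⟩
        · exact Or.inr ⟨q, Or.inr hq, hcond⟩
      · rintro (h | ⟨q, (rfl | hq), hcond⟩)
        · exact Or.inl (Or.inl h)
        · exact Or.inl (Or.inr hcond)
        · exact Or.inr ⟨q, hq, hcond⟩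

lemma builds_any {N : ℕ} (G : SimpleGraph (Fin N)) :
    ∃ e : List (LcwOp (Fin N)), Builds e G := by
  classical
  set ps : List (Fin N × Fin N) :=
    ((List.finRange N) ×ˢ (List.finRange N)).filter (fun p => decide (G.Adj p.1 p.2)) with hps
  refine ⟨(List.finRange N).map LcwOp.insert ++ ps.map (fun p => LcwOp.join p.1 p.2),
    Fin.val, ?_, Fin.val_injective, ?_, ?_, ?_⟩
  · -- WfExpr
    intro op hop i j hop'
    rcases List.mem_append.mp hop with h | h
    · obtain ⟨a, _, rfl⟩ := List.mem_map.mp h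
      exact absurd hop' (by simp)
    · obtain ⟨q, hq, rfl⟩ := List.mem_map.mp h
      have hadj : G.Adj q.1 q.2 := by
        have := (List.mem_filter.mp hq).2
        simpa using this
      cases hop'
      exact G.ne_of_adj hadj
  all_goals {
    have hrun : runLcw ((List.finRange N).map LcwOp.insert ++
        ps.map (fun p => LcwOp.join p.1 p.2)) =
        (ps.map (fun p => LcwOp.join p.1 p.2)).foldl LcwState.step
          (runLcw ((List.finRange N).map LcwOp.insert)) := by
      simp [runLcw, List.foldl_append]
    obtain ⟨hi1, hi2, hi3⟩ := runLcw_insertList (List.finRange N)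
    obtain ⟨hj1, hj2, hj3⟩ := foldl_joins ps (runLcw ((List.finRange N).map LcwOp.insert))
    have hlabv : ∀ v : Fin N,
        (runLcw ((List.finRange N).map LcwOp.insert)).lab (v : ℕ) = some v := by
      intro v
      rw [hi3]
      rw [dif_pos (by simp [v.isLt])]
      simp
    first
    | (show _ = Fintype.card (Fin N); rw [hrun, hj1, hi1]; simp)
    | (intro v; rw [hrun, hj1, hi1]; simpa using v.isLt)
    | (intro u v
       rw [hrun, hj3]
       constructor
       · intro h
         refine Or.inr ⟨(u, v), ?_, ?_, Or.inl ⟨hlabv u, hlabv v⟩⟩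
         · rw [hps]
           refine List.mem_filter.mpr ⟨by simp [List.mem_product], by simpa using h⟩
         · exact fun hh => G.ne_of_adj h (Fin.val_injective hh)
       · rintro (h | ⟨q, hq, hne, hcond⟩)
         · exact absurd h (hi2 _ _)
         · have hadj : G.Adj q.1 q.2 := by
             have := (List.mem_filter.mp hq).2
             simpa using this
           rw [hlabv u, hlabv v] at hcond
           rcases hcond with ⟨h1, h2⟩ | ⟨h1, h2⟩
           · rw [Option.some_inj] at h1 h2; rw [h1, h2]; exact hadj
           · rw [Option.some_inj] at h1 h2; rw [h1, h2]; exact hadj.symm) }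

end Upper

section Family

/-- Abbreviation for the complement family. -/
abbrev Hc (k : ℕ) : SimpleGraph (qtV k) := (qtG k)ᶜ

/-- The injection of the `i`-th copy of `qtV k` into `qtV (k+1)`. -/
def inj4 (k : ℕ) (i : Fin 4) (v : qtV k) : qtV (k+1) :=
  Sum.inr (match i with
    | 0 => Sum.inl (Sum.inl v)
    | 1 => Sum.inl (Sum.inr v)
    | 2 => Sum.inr (Sum.inl v)
    | 3 => Sum.inr (Sum.inr v))

/-- The isolated vertex of `Hc (k+1)`. -/
def zv (k : ℕ) : qtV (k+1) := Sum.inl ()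

lemma inj4_injective (k : ℕ) (i : Fin 4) : Function.Injective (inj4 k i) := by
  intro a b h
  fin_cases i <;> simp only [inj4] at h <;>
    (injection h with h; injection h with h; injection h)

lemma inj4_ne_zv (k : ℕ) (i : Fin 4) (v : qtV k) : inj4 k i v ≠ zv k := by
  fin_cases i <;> (intro h; simp only [inj4, zv] at h; injection h)

lemma inj4_ne (k : ℕ) {i j : Fin 4} (hij : i ≠ j) (a b : qtV k) :
    inj4 k i a ≠ inj4 k j b := by
  fin_cases i <;> fin_cases j <;>
    first
      | exact absurd rfl hij
      | (intro h; simp only [inj4] at h;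
         injection h with h;
         try (injection h with h);
         try injection h)

lemma Hc_succ (k : ℕ) : Hc (k+1) =
    GraphDisjUnion ((⊥ : SimpleGraph Unit)ᶜ)
      ((GraphDisjUnion (GraphDisjUnion (qtG k) (qtG k)) (GraphDisjUnion (qtG k) (qtG k)))ᶜ) := by
  show (qtG (k+1))ᶜ = _
  rw [show qtG (k+1) = GraphJoin (⊥ : SimpleGraph Unit)
    (GraphDisjUnion (GraphDisjUnion (qtG k) (qtG k)) (GraphDisjUnion (qtG k) (qtG k))) from rfl]
  rw [GraphJoin]; exact compl_compl _

lemma adj_zv (k : ℕ) (x : qtV (k+1)) : ¬ (Hc (k+1)).Adj (zv k) x := by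
  rw [Hc_succ]
  rcases x with u | u
  · intro h
    have : ((⊥ : SimpleGraph Unit)ᶜ).Adj () u := h
    simp at this
  · exact fun h => h

lemma adj_same (k : ℕ) (i : Fin 4) (a b : qtV k) :
    (Hc (k+1)).Adj (inj4 k i a) (inj4 k i b) ↔ (Hc k).Adj a b := by
  rw [Hc_succ]
  fin_cases i <;>
    simp [inj4, GraphDisjUnion, SimpleGraph.compl_adj]

lemma adj_cross (k : ℕ) {i j : Fin 4} (hij : i ≠ j) (a b : qtV k) :
    (Hc (k+1)).Adj (inj4 k i a) (inj4 k j b) := by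
  rw [Hc_succ]
  fin_cases i <;> fin_cases j <;>
    first
      | exact absurd rfl hij
      | simp [inj4, GraphDisjUnion, SimpleGraph.compl_adj]

lemma adj_base (a b : Fin 2) : ¬ (Hc 0).Adj a b := by
  show ¬ ((⊤ : SimpleGraph (Fin 2))ᶜ).Adj a b
  simp

end Family

section Good

lemma not_iff_symm {P Q : Prop} (h : ¬(P ↔ Q)) : ¬(Q ↔ P) := fun h' => h h'.symm

/-- Extending a distinguished family of one copy by one extra vertex. -/
lemma extend (k : ℕ) (f : qtV (k+1) → ℕ) (X : Fin 4)
    (M : ℕ) (S : Fin (k+1) → qtV k)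
    (hpast : ∀ i, f (inj4 k X (S i)) < M)
    (hb : ∀ i, ∃ g, M ≤ f (inj4 k X g) ∧ ¬ (Hc k).Adj (S i) g)
    (hw : ∀ i j, i ≠ j → ∃ w, M ≤ f (inj4 k X w) ∧
      ¬((Hc k).Adj (S i) w ↔ (Hc k).Adj (S j) w))
    (u : qtV (k+1)) (hu1 : f u < M)
    (hu2 : ∃ g, M ≤ f g ∧ ¬ (Hc (k+1)).Adj u g)
    (hu3 : ∀ i, ∃ w, M ≤ f w ∧
      ¬ ((Hc (k+1)).Adj u w ↔ (Hc (k+1)).Adj (inj4 k X (S i)) w)) :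
    ∃ (m : ℕ) (s : Fin (k+1+1) → qtV (k+1)),
      (∀ i, f (s i) < m) ∧
      (∀ i, ∃ g, m ≤ f g ∧ ¬ (Hc (k+1)).Adj (s i) g) ∧
      (∀ i j, i ≠ j → ∃ w, m ≤ f w ∧
        ¬ ((Hc (k+1)).Adj (s i) w ↔ (Hc (k+1)).Adj (s j) w)) := by
  refine ⟨M, Fin.snoc (fun i => inj4 k X (S i)) u, ?_, ?_, ?_⟩
  · intro i
    induction i using Fin.lastCases with
    | last => simpa [Fin.snoc_last] using hu1
    | cast i => simpa [Fin.snoc_castSucc] using hpast i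
  · intro i
    induction i using Fin.lastCases with
    | last => rw [Fin.snoc_last]; exact hu2
    | cast i =>
        rw [Fin.snoc_castSucc]
        obtain ⟨g, hg1, hg2⟩ := hb i
        exact ⟨inj4 k X g, hg1, by rwa [adj_same]⟩
  · intro i j hij
    induction i using Fin.lastCases with
    | last =>
        induction j using Fin.lastCases with
        | last => exact absurd rfl hij
        | cast j =>
            rw [Fin.snoc_last, Fin.snoc_castSucc]
            exact hu3 j
    | cast i =>
        induction j using Fin.lastCases with
        | last =>
            rw [Fin.snoc_last, Fin.snoc_castSucc]
            obtain ⟨w, h1, h2⟩ := hu3 i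
            exact ⟨w, h1, not_iff_symm h2⟩
        | cast j =>
            rw [Fin.snoc_castSucc, Fin.snoc_castSucc]
            have hij' : i ≠ j := fun h => hij (by rw [h])
            obtain ⟨w, h1, h2⟩ := hw i j hij'
            exact ⟨inj4 k X w, h1, by rw [adj_same, adj_same]; exact h2⟩

/-- The key induction: for every injective numbering of `Hc k` there is a cut
with `k+1` past vertices pairwise distinguished by future vertices, each of
which moreover has a future non-neighbour. -/
theorem good : ∀ (k : ℕ) (f : qtV k → ℕ), Function.Injective f →
    ∃ (m : ℕ) (s : Fin (k+1) → qtV k),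
      (∀ i, f (s i) < m) ∧
      (∀ i, ∃ g, m ≤ f g ∧ ¬ (Hc k).Adj (s i) g) ∧
      (∀ i j, i ≠ j → ∃ w, m ≤ f w ∧ ¬ ((Hc k).Adj (s i) w ↔ (Hc k).Adj (s j) w))
  | 0, f, hf => by
      rcases Nat.lt_or_ge (f (0 : Fin 2)) (f (1 : Fin 2)) with h | h
      · exact ⟨f (0 : Fin 2) + 1, fun _ => (0 : Fin 2), fun i => Nat.lt_succ_self _,
          fun i => ⟨(1 : Fin 2), by omega, adj_base 0 1⟩,
          fun i j hij => absurd (Subsingleton.elim (α := Fin 1) i j) hij⟩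
      · have hne : f (1 : Fin 2) ≠ f (0 : Fin 2) := by
          intro hh
          have h2 : (1 : Fin 2) = (0 : Fin 2) := hf hh
          simp at h2
        have h' : f (1 : Fin 2) < f (0 : Fin 2) := lt_of_le_of_ne h hne
        exact ⟨f (1 : Fin 2) + 1, fun _ => (1 : Fin 2), fun i => Nat.lt_succ_self _,
          fun i => ⟨(0 : Fin 2), by omega, adj_base 1 0⟩,
          fun i j hij => absurd (Subsingleton.elim (α := Fin 1) i j) hij⟩
  | (k+1), f, hf => by
      have IH := fun (i : Fin 4) =>
        good k (fun v => f (inj4 k i v)) (fun a b h => inj4_injective k i (hf h))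
      choose M S hpast hb hw using IH
      obtain ⟨X₁, -, hX₁⟩ := Finset.exists_min_image Finset.univ M ⟨0, Finset.mem_univ 0⟩
      have hX₁' : ∀ Y, M X₁ ≤ M Y := fun Y => hX₁ Y (Finset.mem_univ Y)
      obtain ⟨y₀, hy₀⟩ := exists_ne X₁
      obtain ⟨X₂, hX₂mem, hX₂⟩ := Finset.exists_min_image (Finset.univ.erase X₁) M
        ⟨y₀, Finset.mem_erase.mpr ⟨hy₀, Finset.mem_univ _⟩⟩
      have hX₂ne : X₂ ≠ X₁ := (Finset.mem_erase.mp hX₂mem).1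
      have hX₂min : ∀ Y, Y ≠ X₁ → M X₂ ≤ M Y :=
        fun Y hY => hX₂ Y (Finset.mem_erase.mpr ⟨hY, Finset.mem_univ _⟩)
      have hX₁₂ : M X₁ ≤ M X₂ := hX₁' X₂
      obtain ⟨W, hW1, hW2⟩ : ∃ Wv : Fin 4, Wv ≠ X₁ ∧ Wv ≠ X₂ := by
        fin_cases X₁ <;> fin_cases X₂ <;> decide
      have future : ∀ Y : Fin 4, ∃ g : qtV k, M Y ≤ f (inj4 k Y g) :=
        fun Y => (hb Y 0).imp fun g hg => hg.1
      by_cases hz1 : f (zv k) < M X₁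
      · -- Branch A: cut `M X₁`, extra vertex `z`
        obtain ⟨g₂, hg₂⟩ := future X₂
        refine extend k f X₁ (M X₁) (S X₁) (hpast X₁) (hb X₁) (hw X₁) (zv k) hz1
          ⟨inj4 k X₂ g₂, le_trans hX₁₂ hg₂, adj_zv k _⟩ ?_
        intro i
        exact ⟨inj4 k X₂ g₂, le_trans hX₁₂ hg₂,
          fun hiff => adj_zv k _ (hiff.mpr (adj_cross k (Ne.symm hX₂ne) _ _))⟩
      · push_neg at hz1
        by_cases hB : ∃ Y : Fin 4, Y ≠ X₁ ∧ ∃ v : qtV k, f (inj4 k Y v) < M X₁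
        · -- Branch B: cut `M X₁`, extra vertex from another copy
          obtain ⟨Y, hY, v, hv⟩ := hB
          refine extend k f X₁ (M X₁) (S X₁) (hpast X₁) (hb X₁) (hw X₁) (inj4 k Y v) hv
            ⟨zv k, hz1, fun h => adj_zv k _ h.symm⟩ ?_
          intro i
          obtain ⟨g, hg1, hg2⟩ := hb X₁ i
          refine ⟨inj4 k X₁ g, hg1, fun hiff => ?_⟩
          exact hg2 ((adj_same k X₁ (S X₁ i) g).mp (hiff.mp (adj_cross k hY _ _)))
        · push_neg at hB
          by_cases hz2 : M X₂ ≤ f (zv k)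
          · -- Branch C1: cut `M X₂`, extra vertex from copy `X₁`
            refine extend k f X₂ (M X₂) (S X₂) (hpast X₂) (hb X₂) (hw X₂)
              (inj4 k X₁ (S X₁ 0)) (lt_of_lt_of_le (hpast X₁ 0) hX₁₂)
              ⟨zv k, hz2, fun h => adj_zv k _ h.symm⟩ ?_
            intro i
            obtain ⟨g, hg1, hg2⟩ := hb X₂ i
            refine ⟨inj4 k X₂ g, hg1, fun hiff => ?_⟩
            exact hg2 ((adj_same k X₂ (S X₂ i) g).mp
              (hiff.mp (adj_cross k (Ne.symm hX₂ne) _ _)))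
          · push_neg at hz2
            -- Branch C2: cut `M X₂`, extra vertex `z`, witnesses from copy `W`
            obtain ⟨gW, hgW⟩ := future W
            have hgW' : M X₂ ≤ f (inj4 k W gW) := le_trans (hX₂min W hW1) hgW
            refine extend k f X₂ (M X₂) (S X₂) (hpast X₂) (hb X₂) (hw X₂) (zv k) hz2
              ⟨inj4 k W gW, hgW', adj_zv k _⟩ ?_
            intro i
            exact ⟨inj4 k W gW, hgW',
              fun hiff => adj_zv k _ (hiff.mpr (adj_cross k (Ne.symm hW2) _ _))⟩

end Good

section QT

instance : DecidableRel pathP4.Adj := fun a b =>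
  decidable_of_iff (a ≠ b ∧ (((b:ℕ) = (a:ℕ) + 1) ∨ ((a:ℕ) = (b:ℕ) + 1)))
    (by rw [pathP4, SimpleGraph.fromRel_adj])

instance : DecidableRel cycleC4.Adj := fun a b =>
  decidable_of_iff (a ≠ b ∧
      ((((b:ℕ) = (a:ℕ) + 1) ∨ ((a:ℕ) = 3 ∧ (b:ℕ) = 0)) ∨
       (((a:ℕ) = (b:ℕ) + 1) ∨ ((b:ℕ) = 3 ∧ (a:ℕ) = 0))))
    (by rw [cycleC4, SimpleGraph.fromRel_adj])

lemma p4_conn : ∀ c : Fin 4 → Bool, (∃ a b, c a ≠ c b) →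
    ∃ a b, pathP4.Adj a b ∧ c a ≠ c b := by decide

lemma c4_conn : ∀ c : Fin 4 → Bool, (∃ a b, c a ≠ c b) →
    ∃ a b, cycleC4.Adj a b ∧ c a ≠ c b := by decide

lemma p4_nodom : ∀ a : Fin 4, ∃ b, b ≠ a ∧ ¬ pathP4.Adj a b := by decide

lemma c4_nodom : ∀ a : Fin 4, ∃ b, b ≠ a ∧ ¬ cycleC4.Adj a b := by decide

lemma induced_disjUnion_cases {V W : Type} {G : SimpleGraph V} {H : SimpleGraph W}
    {P : SimpleGraph (Fin 4)}
    (hconn : ∀ c : Fin 4 → Bool, (∃ a b, c a ≠ c b) → ∃ a b, P.Adj a b ∧ c a ≠ c b)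
    (h : InducedSubgraphOf P (GraphDisjUnion G H)) :
    InducedSubgraphOf P G ∨ InducedSubgraphOf P H := by
  obtain ⟨F, hF⟩ := h
  by_cases h1 : ∀ a : Fin 4, ∃ v, F a = Sum.inl v
  · left
    choose g hg using h1
    exact ⟨⟨g, fun a b hab => F.injective (by rw [hg a, hg b, hab])⟩,
      fun a b => by rw [hF a b, hg a, hg b]; exact Iff.rfl⟩
  · by_cases h2 : ∀ a : Fin 4, ∃ v, F a = Sum.inr v
    · right
      choose g hg using h2
      exact ⟨⟨g, fun a b hab => F.injective (by rw [hg a, hg b, hab])⟩,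
        fun a b => by rw [hF a b, hg a, hg b]; exact Iff.rfl⟩
    · exfalso
      push_neg at h1 h2
      obtain ⟨a0, ha0⟩ := h1
      obtain ⟨b0, hb0⟩ := h2
      have ha0' : ∃ w, F a0 = Sum.inr w := by
        rcases hFa : F a0 with v | v
        · exact absurd hFa (ha0 v)
        · exact ⟨v, rfl⟩
      have hb0' : ∃ v, F b0 = Sum.inl v := by
        rcases hFb : F b0 with v | v
        · exact ⟨v, rfl⟩
        · exact absurd hFb (hb0 v)
      obtain ⟨w0, hw0⟩ := ha0'
      obtain ⟨v0, hv0⟩ := hb0'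
      have hne : (fun a => (F a).isLeft) a0 ≠ (fun a => (F a).isLeft) b0 := by
        simp [hw0, hv0]
      obtain ⟨x, y, hxy, hc⟩ := hconn (fun a => (F a).isLeft) ⟨a0, b0, hne⟩
      have hadj := (hF x y).mp hxy
      rcases hFx : F x with v | v <;> rcases hFy : F y with u | u <;>
        rw [hFx, hFy] at hadj
      · exact hc (by simp [hFx, hFy])
      · exact hadj
      · exact hadj
      · exact hc (by simp [hFx, hFy])

lemma join_adj_inl {W : Type} {H : SimpleGraph W} (x : Unit) (b : W) :
    (GraphJoin (⊥ : SimpleGraph Unit) H).Adj (Sum.inl x) (Sum.inr b) := by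
  rw [GraphJoin, SimpleGraph.compl_adj]
  exact ⟨by simp, fun h => h⟩

lemma join_adj_inr {W : Type} {H : SimpleGraph W} (a b : W) :
    (GraphJoin (⊥ : SimpleGraph Unit) H).Adj (Sum.inr a) (Sum.inr b) ↔ H.Adj a b := by
  rw [GraphJoin, SimpleGraph.compl_adj]
  constructor
  · rintro ⟨hne, h⟩
    have hne' : a ≠ b := fun hh => hne (by rw [hh])
    by_contra hH
    exact h (show a ≠ b ∧ ¬H.Adj a b from ⟨hne', hH⟩)
  · intro h
    refine ⟨by simp [H.ne_of_adj h], fun hh => ?_⟩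
    have : (Hᶜ).Adj a b := hh
    rw [SimpleGraph.compl_adj] at this
    exact this.2 h

lemma induced_joinK1 {W : Type} {H : SimpleGraph W} {P : SimpleGraph (Fin 4)}
    (hndom : ∀ a : Fin 4, ∃ b, b ≠ a ∧ ¬ P.Adj a b)
    (h : InducedSubgraphOf P (GraphJoin (⊥ : SimpleGraph Unit) H)) :
    InducedSubgraphOf P H := by
  obtain ⟨F, hF⟩ := h
  by_cases h1 : ∀ a : Fin 4, ∃ v, F a = Sum.inr v
  · choose g hg using h1
    exact ⟨⟨g, fun a b hab => F.injective (by rw [hg a, hg b, hab])⟩,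
      fun a b => by rw [hF a b, hg a, hg b, join_adj_inr]; exact Iff.rfl⟩
  · exfalso
    push_neg at h1
    obtain ⟨a0, ha0⟩ := h1
    have hFa0 : F a0 = Sum.inl () := by
      rcases hFa : F a0 with v | v
      · cases v; rfl
      · exact absurd hFa (ha0 v)
    obtain ⟨b, hb1, hb2⟩ := hndom a0
    have hFb : ∃ w, F b = Sum.inr w := by
      rcases hFb : F b with v | v
      · cases v
        exact absurd (F.injective (hFb.trans hFa0.symm)) hb1
      · exact ⟨v, rfl⟩
    obtain ⟨w, hw⟩ := hFb
    exact hb2 ((hF a0 b).mpr (by rw [hFa0, hw]; exact join_adj_inl () w))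

lemma qt_disjUnion {V W : Type} {G : SimpleGraph V} {H : SimpleGraph W}
    (hG : IsQuasiThreshold G) (hH : IsQuasiThreshold H) :
    IsQuasiThreshold (GraphDisjUnion G H) := by
  constructor
  · intro h
    rcases induced_disjUnion_cases p4_conn h with h | h
    exacts [hG.1 h, hH.1 h]
  · intro h
    rcases induced_disjUnion_cases c4_conn h with h | h
    exacts [hG.2 h, hH.2 h]

lemma qt_joinK1 {W : Type} {H : SimpleGraph W} (hH : IsQuasiThreshold H) :
    IsQuasiThreshold (GraphJoin (⊥ : SimpleGraph Unit) H) :=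
  ⟨fun h => hH.1 (induced_joinK1 p4_nodom h), fun h => hH.2 (induced_joinK1 c4_nodom h)⟩

lemma qtG_isQT : ∀ k : ℕ, IsQuasiThreshold (qtG k)
  | 0 => by
      constructor <;>
        · rintro ⟨F, -⟩
          have := Fintype.card_le_of_injective F F.injective
          have h2 : Fintype.card (qtV 0) = 2 := rfl
          simp [h2] at this
  | (k+1) => by
      have ih := qtG_isQT k
      show IsQuasiThreshold (GraphJoin _ _)
      exact qt_joinK1 (qt_disjUnion (qt_disjUnion ih ih) (qt_disjUnion ih ih))

end QT

/-- the class of complements of quasi-threshold graphs has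
unbounded linear clique-width. -/
theorem statement_10 (k : ℕ) :
    ∃ (n : ℕ) (G : SimpleGraph (Fin n)), IsQuasiThreshold G ∧ k < lcw Gᶜ := by
  classical
  set N := Fintype.card (qtV k) with hN
  set φ : qtV k ≃ Fin N := Fintype.equivFin (qtV k) with hφ
  refine ⟨N, SimpleGraph.comap (φ.symm : Fin N → qtV k) (qtG k), ?_, ?_⟩
  · -- the graph is quasi-threshold
    have hqt := qtG_isQT k
    constructor
    · rintro ⟨F, hF⟩
      exact hqt.1 ⟨F.trans φ.symm.toEmbedding, fun a b => hF a b⟩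
    · rintro ⟨F, hF⟩
      exact hqt.2 ⟨F.trans φ.symm.toEmbedding, fun a b => hF a b⟩
  · -- linear clique-width of the complement is large
    set G' := SimpleGraph.comap (φ.symm : Fin N → qtV k) (qtG k) with hG'
    have hcompl : ∀ a b : Fin N, (G'ᶜ).Adj a b ↔ (Hc k).Adj (φ.symm a) (φ.symm b) := by
      intro a b
      rw [SimpleGraph.compl_adj, SimpleGraph.compl_adj]
      constructor
      · rintro ⟨h1, h2⟩
        exact ⟨fun hh => h1 (φ.symm.injective hh), h2⟩
      · rintro ⟨h1, h2⟩
        exact ⟨fun hh => h1 (by rw [hh]), h2⟩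
    have hGood : ∀ f : Fin N → ℕ, Function.Injective f →
        ∃ (m : ℕ) (s : Fin (k+1) → Fin N),
          (∀ i, f (s i) < m) ∧
          (∀ i i', i ≠ i' → ∃ w, m ≤ f w ∧ ¬((G'ᶜ).Adj (s i) w ↔ (G'ᶜ).Adj (s i') w)) := by
      intro f hfinj
      obtain ⟨m, s, h1, -, h3⟩ := good k (fun v => f (φ v)) (fun a b h => φ.injective (hfinj h))
      refine ⟨m, fun i => φ (s i), fun i => h1 i, fun i j hij => ?_⟩
      obtain ⟨w, hw1, hw2⟩ := h3 i j hij
      refine ⟨φ w, hw1, fun hiff => hw2 ?_⟩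
      have e1 := hcompl (φ (s i)) (φ w)
      have e2 := hcompl (φ (s j)) (φ w)
      rw [Equiv.symm_apply_apply, Equiv.symm_apply_apply] at e1 e2
      exact e1.symm.trans (hiff.trans e2)
    obtain ⟨e, he⟩ := builds_any (G'ᶜ)
    have hne : {j : ℕ | ∃ e : List (LcwOp (Fin j)), Builds e (G'ᶜ)}.Nonempty := ⟨N, e, he⟩
    have hmem := Nat.sInf_mem hne
    obtain ⟨e', he'⟩ := hmem
    have hlow := labels_lower_bound e' he' hGood
    have hlcw : lcw (G'ᶜ) = sInf {j : ℕ | ∃ e : List (LcwOp (Fin j)), Builds e (G'ᶜ)} := rfl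
    omega
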